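/- arXiv:1612.02416 — 5 statements merged into one kernel-verified Lean document; each statement's English description precedes it below -/
import Mathlib

section
/- Let p ∈ ℝ^I be strictly positive with Σᵢ pᵢ = 1, D a K×I full-row-rank matrix with D𝟙 = 0, Σ = Δ[p] − p p′, H = (𝟙, Δ[p⁻¹]D′), and M = I − Δ[p] H (H′Δ[p]H)⁻¹ H′. Then M = (Σ − D′(D Δ[p⁻¹] D′)⁻¹ D) · Δ[p⁻¹]. -/
open Matrix

/-- If `D𝟙 = 0`, `Σ = Δ[p] − pp′`, `H = (𝟙, Δ[p⁻¹]D′)`, and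
`M = I − Δ[p] H (H′Δ[p]H)⁻¹ H′`, then `M = (Σ − D′(DΔ[p⁻¹]D′)⁻¹D) Δ[p⁻¹]`. -/
theorem M_eq_Sigma_formula
    {I K : ℕ} (p : Fin I → ℝ) (hp : ∀ i, 0 < p i) (hsum : ∑ i, p i = 1)
    (D : Matrix (Fin K) (Fin I) ℝ) (hD : D.rank = K)
    (hD1 : D *ᵥ (fun _ => (1 : ℝ)) = 0)
    (H : Matrix (Fin I) (Unit ⊕ Fin K) ℝ)
    (hH : H = fromCols (Matrix.of fun _ (_ : Unit) => (1 : ℝ))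
      (diagonal (fun i => (p i)⁻¹) * Dᵀ))
    (Sig : Matrix (Fin I) (Fin I) ℝ) (hSig : Sig = diagonal p - vecMulVec p p)
    (M : Matrix (Fin I) (Fin I) ℝ)
    (hM : M = 1 - diagonal p * H * (Hᵀ * diagonal p * H)⁻¹ * Hᵀ) :
    M = (Sig - Dᵀ * (D * diagonal (fun i => (p i)⁻¹) * Dᵀ)⁻¹ * D) *
      diagonal (fun i => (p i)⁻¹) := by
  classical
  have hpne : ∀ i, p i ≠ 0 := fun i => (hp i).ne'
  set Q : Matrix (Fin I) (Fin I) ℝ := diagonal (fun i => (p i)⁻¹) with hQdef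
  set P : Matrix (Fin I) (Fin I) ℝ := diagonal p with hPdef
  set E : Matrix (Fin I) Unit ℝ := Matrix.of (fun _ (_ : Unit) => (1 : ℝ)) with hEdef
  set A : Matrix (Fin K) (Fin K) ℝ := D * Q * Dᵀ with hAdef
  have hPQ : P * Q = 1 := by
    rw [hPdef, hQdef, diagonal_mul_diagonal,
      show (fun i => p i * (p i)⁻¹) = fun _ : Fin I => (1 : ℝ) from
        funext fun i => mul_inv_cancel₀ (hpne i), diagonal_one]
  have hQP : Q * P = 1 := by
    rw [hPdef, hQdef, diagonal_mul_diagonal,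
      show (fun i => (p i)⁻¹ * p i) = fun _ : Fin I => (1 : ℝ) from
        funext fun i => inv_mul_cancel₀ (hpne i), diagonal_one]
  -- rows of D are linearly independent
  have hLI : LinearIndependent ℝ (fun k => D k) := by
    rw [linearIndependent_iff_card_eq_finrank_span]
    rw [Set.finrank, Fintype.card_fin]
    exact hD.symm.trans (Matrix.rank_eq_finrank_span_row D)
  have hinj : Function.Injective D.vecMul := Matrix.vecMul_injective_iff.mpr hLI
  -- A is positive definite
  have hApos : A.PosDef := by
    refine Matrix.PosDef.of_dotProduct_mulVec_pos ?_ ?_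
    · show Aᴴ = A
      have h1 : Aᴴ = Aᵀ := by
        ext i j
        simp [conjTranspose_apply]
      rw [h1, hAdef, Matrix.transpose_mul, Matrix.transpose_mul, Matrix.transpose_transpose,
        hQdef, diagonal_transpose, ← hQdef, Matrix.mul_assoc]
    · intro x hx
      have hy : D.vecMul x ≠ 0 := by
        intro h
        exact hx (hinj (by simpa [Matrix.vecMul_zero] using h))
      have hAx : A *ᵥ x = D *ᵥ (Q *ᵥ (Dᵀ *ᵥ x)) := by
        rw [hAdef, ← mulVec_mulVec, ← mulVec_mulVec]
      rw [hAx, show (star x) = x from star_trivial x, dotProduct_mulVec,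
        Matrix.mulVec_transpose]
      set y := D.vecMul x with hydef
      have : y ⬝ᵥ Q *ᵥ y = ∑ i, (p i)⁻¹ * (y i) ^ 2 := by
        simp [dotProduct, hQdef, mulVec_diagonal]
        congr 1; funext i; ring
      rw [this]
      obtain ⟨j, hj⟩ := Function.ne_iff.mp hy
      apply Finset.sum_pos'
      · intro i _
        exact mul_nonneg (inv_nonneg.mpr (hp i).le) (sq_nonneg _)
      · refine ⟨j, Finset.mem_univ j, ?_⟩
        have h2 : 0 < y j ^ 2 := lt_of_le_of_ne (sq_nonneg _) (Ne.symm (pow_ne_zero 2 hj))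
        exact mul_pos (inv_pos.mpr (hp j)) h2
  have hAunit : IsUnit A.det := hApos.isUnit.map (detMonoidHom)
  have hAinv : A * A⁻¹ = 1 := Matrix.mul_nonsing_inv A hAunit
  -- D * E = 0
  have hDE : D * E = 0 := by
    ext k u
    have := congr_fun hD1 k
    simpa [mul_apply, hEdef, mulVec, dotProduct] using this
  -- the middle block matrix
  have hB : Hᵀ * P * H = fromBlocks 1 0 0 A := by
    rw [hH, transpose_fromCols, fromRows_mul, fromRows_mul_fromCols]
    have h11 : Eᵀ * P * E = (1 : Matrix Unit Unit ℝ) := by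
      ext u v
      simp [mul_apply, hEdef, hPdef, diagonal, Finset.sum_comm, hsum]
    have h12 : Eᵀ * P * (Q * Dᵀ) = 0 := by
      rw [Matrix.mul_assoc, ← Matrix.mul_assoc P Q Dᵀ, hPQ, Matrix.one_mul,
        ← Matrix.transpose_mul, hDE, Matrix.transpose_zero]
    have htr : (Q * Dᵀ)ᵀ = D * Q := by
      rw [Matrix.transpose_mul, Matrix.transpose_transpose, hQdef, diagonal_transpose, ← hQdef]
    have hDQP : D * Q * P = D := by
      rw [Matrix.mul_assoc, hQP, Matrix.mul_one]
    have h21 : (Q * Dᵀ)ᵀ * P * E = 0 := by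
      rw [htr, hDQP, hDE]
    have h22 : (Q * Dᵀ)ᵀ * P * (Q * Dᵀ) = A := by
      rw [htr, hDQP, hAdef, Matrix.mul_assoc]
    rw [h11, h12, h21, h22]
  have hBinv : (Hᵀ * P * H)⁻¹ = fromBlocks 1 0 0 A⁻¹ := by
    rw [hB]
    apply Matrix.inv_eq_right_inv
    rw [fromBlocks_multiply]
    simp [hAinv, fromBlocks_one]
  -- compute P * H * (HᵀPH)⁻¹ * Hᵀ
  have hPH : P * H = fromCols (P * E) Dᵀ := by
    rw [hH, mul_fromCols, ← Matrix.mul_assoc, hPQ, Matrix.one_mul]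
  have hHt : Hᵀ = fromRows Eᵀ (D * Q) := by
    rw [hH, transpose_fromCols, Matrix.transpose_mul, hQdef, diagonal_transpose,
      Matrix.transpose_transpose, ← hQdef]
  have hmain : P * H * (Hᵀ * P * H)⁻¹ * Hᵀ
      = (P * E) * Eᵀ + Dᵀ * A⁻¹ * (D * Q) := by
    rw [hBinv, hPH, hHt, fromCols_mul_fromBlocks, fromCols_mul_fromRows]
    simp [Matrix.mul_assoc]
  have houter : (P * E) * Eᵀ = vecMulVec p p * Q := by
    ext i j
    simp [mul_apply, hEdef, hPdef, hQdef, vecMulVec, diagonal, mul_inv_cancel₀ (hpne j),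
      mul_assoc]
  rw [hM, hmain, hSig, houter]
  rw [Matrix.sub_mul, Matrix.sub_mul, hPQ]
  rw [Matrix.mul_assoc (Dᵀ * A⁻¹) D Q]
  abel
end

section
/- Let p ∈ ℝ^I be strictly positive with Σᵢ pᵢ = 1, D a K×I full-row-rank matrix with D𝟙 = 0, and Σ = Δ[p] − p p′. Set M = (Σ − D′(D Δ[p⁻¹] D′)⁻¹ D) Δ[p⁻¹]. Then M Σ M′ = Σ − D′(D Δ[p⁻¹] D′)⁻¹ D. -/
open Matrix

/-- If `D𝟙 = 0`, `Σ = Δ[p] − pp′`, and `M = (Σ − D′(DΔ[p⁻¹]D′)⁻¹D) Δ[p⁻¹]`, then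
`M Σ M′ = Σ − D′(DΔ[p⁻¹]D′)⁻¹D`. -/
theorem MSigmaMt_eq
    {I K : ℕ} (p : Fin I → ℝ) (hp : ∀ i, 0 < p i) (hsum : ∑ i, p i = 1)
    (D : Matrix (Fin K) (Fin I) ℝ) (hD : D.rank = K)
    (hD1 : D *ᵥ (fun _ => (1 : ℝ)) = 0)
    (Sig : Matrix (Fin I) (Fin I) ℝ) (hSig : Sig = diagonal p - vecMulVec p p)
    (M : Matrix (Fin I) (Fin I) ℝ)
    (hM : M = (Sig - Dᵀ * (D * diagonal (fun i => (p i)⁻¹) * Dᵀ)⁻¹ * D) *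
      diagonal (fun i => (p i)⁻¹)) :
    M * Sig * Mᵀ = Sig - Dᵀ * (D * diagonal (fun i => (p i)⁻¹) * Dᵀ)⁻¹ * D := by
  classical
  set Δ : Matrix (Fin I) (Fin I) ℝ := diagonal (fun i => (p i)⁻¹) with hΔ
  set B : Matrix (Fin K) (Fin K) ℝ := D * Δ * Dᵀ with hB
  have hpne : ∀ i, p i ≠ 0 := fun i => (hp i).ne'
  -- B is invertible
  have hBunit : IsUnit B := by
    set E : Matrix (Fin I) (Fin I) ℝ := diagonal (fun i => Real.sqrt (p i)⁻¹) with hE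
    have hEE : E * Eᵀ = Δ := by
      have h : (fun i => Real.sqrt (p i)⁻¹ * Real.sqrt (p i)⁻¹) = fun i => (p i)⁻¹ :=
        funext fun i => Real.mul_self_sqrt (inv_nonneg.mpr (hp i).le)
      rw [hE, hΔ, diagonal_transpose, diagonal_mul_diagonal, h]
    have hBfact : B = (D * E) * (D * E)ᵀ := by
      rw [transpose_mul, hB, ← hEE]
      simp only [Matrix.mul_assoc]
    have hEdet : IsUnit E.det := by
      rw [hE, det_diagonal]
      refine isUnit_iff_ne_zero.mpr (Finset.prod_ne_zero_iff.mpr fun i _ => ?_)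
      exact (Real.sqrt_pos.mpr (inv_pos.mpr (hp i))).ne'
    have hrank : B.rank = K := by
      rw [hBfact, rank_self_mul_transpose, rank_mul_eq_left_of_isUnit_det E D hEdet, hD]
    -- rank = card ⇒ surjective mulVec ⇒ unit
    rw [← Matrix.mulVec_surjective_iff_isUnit]
    have : LinearMap.range B.mulVecLin = ⊤ := by
      apply Submodule.eq_top_of_finrank_eq
      rw [← Matrix.rank, hrank, Module.finrank_fintype_fun_eq_card, Fintype.card_fin]
    intro v
    have := this ▸ Submodule.mem_top (R := ℝ) (x := v)
    obtain ⟨x, hx⟩ := this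
    exact ⟨x, hx⟩
  have hBdet : IsUnit B.det := (isUnit_iff_isUnit_det B).mp hBunit
  -- symmetry facts
  have hΔt : Δᵀ = Δ := diagonal_transpose _
  have hSigt : Sigᵀ = Sig := by
    rw [hSig, transpose_sub, diagonal_transpose]
    congr 1
    ext i j
    simp [transpose_apply, vecMulVec_apply, mul_comm]
  have hBt : Bᵀ = B := by
    rw [hB, transpose_mul, transpose_mul, transpose_transpose, hΔt, Matrix.mul_assoc]
  have hBit : (B⁻¹)ᵀ = B⁻¹ := by rw [transpose_nonsing_inv, hBt]
  set A : Matrix (Fin I) (Fin I) ℝ := Dᵀ * B⁻¹ * D with hA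
  have hAt : Aᵀ = A := by
    rw [hA, transpose_mul, transpose_mul, transpose_transpose, hBit, Matrix.mul_assoc]
  -- Sig * Δ = 1 - vecMulVec p 𝟙
  have hSD : Sig * Δ = 1 - vecMulVec p (fun _ => (1 : ℝ)) := by
    rw [hSig, Matrix.sub_mul, hΔ, diagonal_mul_diagonal]
    congr 1
    · have h : (fun i => p i * (p i)⁻¹) = fun _ => (1 : ℝ) :=
        funext fun i => mul_inv_cancel₀ (hpne i)
      rw [h, diagonal_one]
    · rw [vecMulVec_eq (Fin 1), vecMulVec_eq (Fin 1), Matrix.mul_assoc, ← replicateRow_vecMul]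
      congr 1
      funext _ i
      simp [vecMul_diagonal, mul_inv_cancel₀ (hpne i)]
  -- 𝟙ᵀ Sig = 0
  have hone : (fun _ => (1 : ℝ)) ᵥ* Sig = 0 := by
    funext j
    simp only [hSig, vecMul, dotProduct, Matrix.sub_apply, diagonal_apply, vecMulVec_apply,
      one_mul, mul_sub, Pi.zero_apply]
    rw [Finset.sum_sub_distrib]
    have h1 : ∑ i, (if i = j then p i else 0) = p j := by simp
    have h2 : ∑ i, p i * p j = p j := by
      rw [← Finset.sum_mul, hsum, one_mul]
    rw [h1, h2, sub_self]
  -- 𝟙ᵀ Dᵀ = 0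
  have honeD : (fun _ => (1 : ℝ)) ᵥ* Dᵀ = 0 := by
    rw [vecMul_transpose, hD1]
  -- key identity: (1 - p𝟙ᵀ) annihilation
  have hkill : ∀ (N : Matrix (Fin I) (Fin I) ℝ) (m : ℕ) (C : Matrix (Fin I) (Fin m) ℝ),
      (fun _ => (1 : ℝ)) ᵥ* C = 0 → ((1 : Matrix (Fin I) (Fin I) ℝ) - vecMulVec p (fun _ => (1 : ℝ))) * C = C := by
    intro _ m C hC
    rw [Matrix.sub_mul, Matrix.one_mul, vecMulVec_eq (Fin 1), Matrix.mul_assoc, ← replicateRow_vecMul,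
      hC]
    have h0 : replicateRow (Fin 1) (0 : Fin m → ℝ) = 0 := by ext; simp
    rw [h0, Matrix.mul_zero, sub_zero]
  have L3 : Sig * Δ * Sig = Sig := by
    rw [hSD]; exact hkill 1 I Sig hone
  have L1 : Sig * Δ * Dᵀ = Dᵀ := by
    rw [hSD]; exact hkill 1 K Dᵀ honeD
  have L2 : D * Δ * Sig = D := by
    have := congrArg transpose L1
    rwa [transpose_mul, transpose_mul, hΔt, hSigt, transpose_transpose, ← Matrix.mul_assoc]
      at this
  have L4 : A * Δ * A = A := by
    calc A * Δ * A = Dᵀ * B⁻¹ * (D * Δ * Dᵀ) * (B⁻¹ * D) := by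
            simp only [hA, Matrix.mul_assoc]
      _ = Dᵀ * B⁻¹ * (B * B⁻¹) * D := by rw [← hB]; simp only [Matrix.mul_assoc]
      _ = A := by rw [Matrix.mul_nonsing_inv B hBdet, Matrix.mul_one, hA]
  have LSA : Sig * Δ * A = A := by
    calc Sig * Δ * A = (Sig * Δ * Dᵀ) * (B⁻¹ * D) := by simp only [hA, Matrix.mul_assoc]
      _ = A := by rw [L1, hA, Matrix.mul_assoc]
  have LAS : A * Δ * Sig = A := by
    calc A * Δ * Sig = Dᵀ * B⁻¹ * (D * Δ * Sig) := by simp only [hA, Matrix.mul_assoc]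
      _ = A := by rw [L2, hA]
  -- now the main computation
  have hMt : Mᵀ = Δ * (Sig - A) := by
    rw [hM, transpose_mul, hΔt, transpose_sub, hSigt, hAt]
  have expand : (Sig - A) * Δ * Sig * (Δ * (Sig - A)) =
      (Sig * Δ * Sig * Δ * Sig - Sig * Δ * Sig * Δ * A) -
        (A * Δ * Sig * Δ * Sig - A * Δ * Sig * Δ * A) := by
    noncomm_ring
  rw [hMt, hM, expand, L3, L3, LSA, LAS, LAS, L4]
  abel
end

section
/- Let p ∈ ℝ^I be strictly positive with Σᵢ pᵢ = 1, D a K×I full-row-rank matrix, Σ₁ = I − √p(√p)′, H = (𝟙, Δ[p⁻¹]D′) of full column rank 1+K, and C = Δ[p^{1/2}] H (H′Δ[p]H)⁻¹ H′ Δ[p^{1/2}]. Then rank(C Σ₁) = K. -/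
open Matrix

section Aux

variable {n : Type*} [Fintype n] [DecidableEq n]

/-- For an idempotent real matrix, the rank equals the trace. -/
lemma rank_eq_trace_of_idem (A : Matrix n n ℝ) (h : A * A = A) :
    (A.rank : ℝ) = A.trace := by
  have hf : A.mulVecLin ∘ₗ A.mulVecLin = A.mulVecLin := by
    rw [← Matrix.mulVecLin_mul, h]
  have hproj : LinearMap.IsProj (LinearMap.range A.mulVecLin) A.mulVecLin := by
    constructor
    · exact fun x => LinearMap.mem_range_self _ x
    · rintro x ⟨y, rfl⟩
      exact congrFun (congrArg DFunLike.coe hf) y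
  have ht := hproj.trace
  have h1 : LinearMap.trace ℝ (n → ℝ) A.mulVecLin = A.trace := by
    rw [← Matrix.toLin'_apply' A, LinearMap.trace_eq_matrix_trace ℝ (Pi.basisFun ℝ n)]
    rw [LinearMap.toMatrix_eq_toMatrix', LinearMap.toMatrix'_toLin']
  rw [Matrix.rank, ← h1, ht]

lemma mul_vecMulVec {m : Type*} [Fintype m] (A : Matrix n m ℝ) (u : m → ℝ) (v : n → ℝ) :
    A * vecMulVec u v = vecMulVec (A.mulVec u) (v) := by
  ext i j
  simp [Matrix.mul_apply, vecMulVec_apply, Matrix.mulVec, dotProduct,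
    Finset.sum_mul, mul_assoc]

lemma vecMulVec_mul {m : Type*} [Fintype m] (A : Matrix n m ℝ) (u : n → ℝ) (v : n → ℝ) :
    vecMulVec u v * A = vecMulVec u (Aᵀ.mulVec v) := by
  ext i j
  simp only [Matrix.mul_apply, vecMulVec_apply, Matrix.mulVec, dotProduct,
    transpose_apply]
  rw [Finset.mul_sum]
  exact Finset.sum_congr rfl fun x _ => by ring

end Aux

private theorem rank_CSigma_aux
    {I K : ℕ} (p : Fin I → ℝ) (hp : ∀ i, 0 < p i) (hsum : ∑ i, p i = 1)
    (H : Matrix (Fin I) (Unit ⊕ Fin K) ℝ)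
    (hHcol : ∀ i, H i (Sum.inl ()) = 1)
    (hHrank : H.rank = 1 + K)
    (Sig1 : Matrix (Fin I) (Fin I) ℝ)
    (hSig1 : Sig1 = 1 - vecMulVec (fun i => Real.sqrt (p i)) (fun i => Real.sqrt (p i)))
    (C : Matrix (Fin I) (Fin I) ℝ)
    (hC : C = diagonal (fun i => Real.sqrt (p i)) * H * (Hᵀ * diagonal p * H)⁻¹ * Hᵀ *
      diagonal (fun i => Real.sqrt (p i))) :
    (C * Sig1).rank = K := by
  classical
  set s : Fin I → ℝ := fun i => Real.sqrt (p i) with hs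
  have hss : ∀ i, s i * s i = p i := fun i => Real.mul_self_sqrt (hp i).le
  set Δ : Matrix (Fin I) (Fin I) ℝ := diagonal s with hΔ
  set G : Matrix (Fin I) (Unit ⊕ Fin K) ℝ := Δ * H with hG
  set S : Matrix (Unit ⊕ Fin K) (Unit ⊕ Fin K) ℝ := Hᵀ * diagonal p * H with hSdef
  clear_value Δ G S
  have hΔT : Δᵀ = Δ := by rw [hΔ]; exact diagonal_transpose s
  have hΔΔ : Δ * Δ = diagonal p := by
    rw [hΔ, diagonal_mul_diagonal]
    exact congrArg diagonal (funext hss)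
  have hSG : S = Gᵀ * G := by
    rw [hG, transpose_mul, hΔT, hSdef, ← hΔΔ]
    simp [Matrix.mul_assoc]
  -- Δ has unit determinant
  have hdetΔ : IsUnit Δ.det := by
    rw [hΔ, det_diagonal]
    exact (Finset.prod_pos fun i _ => Real.sqrt_pos.mpr (hp i)).ne'.isUnit
  have hGrank : G.rank = 1 + K := by
    rw [hG, rank_mul_eq_right_of_isUnit_det Δ H hdetΔ, hHrank]
  -- S is invertible
  have hScard : Fintype.card (Unit ⊕ Fin K) = 1 + K := by simp
  have hkerG : LinearMap.ker G.mulVecLin = ⊥ := by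
    have hrn := LinearMap.finrank_range_add_finrank_ker G.mulVecLin
    rw [show Module.finrank ℝ ((Unit ⊕ Fin K) → ℝ) = 1 + K by simp [hScard]] at hrn
    rw [← Matrix.rank] at hrn
    rw [hGrank] at hrn
    have : Module.finrank ℝ (LinearMap.ker G.mulVecLin) = 0 := by omega
    exact Submodule.finrank_eq_zero.mp this
  have hSunit : IsUnit S := by
    rw [← Matrix.mulVec_injective_iff_isUnit]
    have : LinearMap.ker S.mulVecLin = ⊥ := by
      rw [hSG, Matrix.ker_mulVecLin_transpose_mul_self, hkerG]
    intro x y hxy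
    have := LinearMap.ker_eq_bot.mp this
    exact this hxy
  have hSdet : IsUnit S.det := S.isUnit_iff_isUnit_det.mp hSunit
  have hSinv : S⁻¹ * S = 1 := S.nonsing_inv_mul hSdet
  have hSinv' : S * S⁻¹ = 1 := S.mul_nonsing_inv hSdet
  -- C in terms of G
  have hGT : Gᵀ = Hᵀ * Δ := by rw [hG, transpose_mul, hΔT]
  have hCG : C = G * S⁻¹ * Gᵀ := by
    rw [hC, hGT, Matrix.mul_assoc (G * S⁻¹)]
  -- the unit vector e picking out the first column
  set e : (Unit ⊕ Fin K) → ℝ := Sum.elim (fun _ => 1) (fun _ => 0) with he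
  have hGe : G.mulVec e = s := by
    funext i
    rw [hG, ← Matrix.mulVec_mulVec]
    have hHe : H.mulVec e = fun _ => 1 := by
      funext i
      simp [Matrix.mulVec, dotProduct, he, Fintype.sum_sum_type, hHcol i]
    rw [hHe]
    simp [hΔ, Matrix.mulVec, dotProduct, diagonal]
  -- C fixes s
  have hCGeq : C * G = G := by
    rw [hCG, Matrix.mul_assoc (G * S⁻¹), ← hSG, Matrix.mul_assoc, hSinv, Matrix.mul_one]
  have hCs : C.mulVec s = s := by
    rw [← hGe, Matrix.mulVec_mulVec, hCGeq]
  set P : Matrix (Fin I) (Fin I) ℝ := vecMulVec s s with hP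
  clear_value P
  have hPT : Pᵀ = P := by
    ext i j
    simp [hP, vecMulVec_apply, mul_comm]
  -- C is symmetric
  have hST : Sᵀ = S := by rw [hSG, transpose_mul, transpose_transpose]
  have hCT : Cᵀ = C := by
    rw [hCG, transpose_mul, transpose_mul, transpose_transpose, transpose_nonsing_inv, hST]
    simp only [Matrix.mul_assoc]
  have hCP : C * P = P := by
    rw [hP, _root_.mul_vecMulVec, hCs]
  have hPC : P * C = P := by
    rw [hP, _root_.vecMulVec_mul, hCT, hCs]
  have hPs : P.mulVec s = s := by
    funext i
    rw [hP]
    show ∑ j, vecMulVec s s i j * s j = s i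
    simp only [vecMulVec_apply]
    rw [show (∑ j, s i * s j * s j) = s i * ∑ j, p j from by
      rw [Finset.mul_sum]; exact Finset.sum_congr rfl fun j _ => by rw [mul_assoc, hss j]]
    rw [hsum, mul_one]
  have hPP : P * P = P := by
    nth_rewrite 2 [hP]
    rw [_root_.mul_vecMulVec, hPs, ← hP]
  have hCC : C * C = C := by
    nth_rewrite 2 [hCG]
    rw [show C * (G * S⁻¹ * Gᵀ) = (C * G) * (S⁻¹ * Gᵀ) from by simp only [Matrix.mul_assoc],
      hCGeq, ← Matrix.mul_assoc, ← hCG]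
  -- M = C - P
  have hM : C * Sig1 = C - P := by
    rw [hSig1, Matrix.mul_sub, Matrix.mul_one, hCP, hP]
  have hidem : (C * Sig1) * (C * Sig1) = C * Sig1 := by
    rw [hM, Matrix.sub_mul, Matrix.mul_sub, Matrix.mul_sub, hCC, hCP, hPC, hPP]
    abel
  have htrP : P.trace = 1 := by
    rw [hP, Matrix.trace]
    simp only [Matrix.diag_apply, vecMulVec_apply]
    rw [show ∑ i, s i * s i = ∑ i, p i from Finset.sum_congr rfl fun i _ => hss i, hsum]
  have htrC : C.trace = 1 + K := by
    rw [hCG, Matrix.mul_assoc, Matrix.trace_mul_comm, Matrix.mul_assoc, ← hSG,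
      hSinv, Matrix.trace_one, hScard]
    push_cast
    ring
  have htr : (C * Sig1).trace = K := by
    rw [hM, Matrix.trace_sub, htrC, htrP]
    ring
  have := rank_eq_trace_of_idem (C * Sig1) hidem
  rw [htr] at this
  exact_mod_cast this


/-- With `Σ₁ = I − √p(√p)′` and `C = Δ[√p] H (H′Δ[p]H)⁻¹ H′ Δ[√p]`, one has
`rank(C Σ₁) = K`. -/
theorem rank_CSigma_eq_K
    {I K : ℕ} (p : Fin I → ℝ) (hp : ∀ i, 0 < p i) (hsum : ∑ i, p i = 1)
    (D : Matrix (Fin K) (Fin I) ℝ) (hD : D.rank = K)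
    (H : Matrix (Fin I) (Unit ⊕ Fin K) ℝ)
    (hH : H = fromCols (Matrix.of fun _ (_ : Unit) => (1 : ℝ))
      (diagonal (fun i => (p i)⁻¹) * Dᵀ))
    (hHrank : H.rank = 1 + K)
    (Sig1 : Matrix (Fin I) (Fin I) ℝ)
    (hSig1 : Sig1 = 1 - vecMulVec (fun i => Real.sqrt (p i)) (fun i => Real.sqrt (p i)))
    (C : Matrix (Fin I) (Fin I) ℝ)
    (hC : C = diagonal (fun i => Real.sqrt (p i)) * H * (Hᵀ * diagonal p * H)⁻¹ * Hᵀ *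
      diagonal (fun i => Real.sqrt (p i))) :
    (C * Sig1).rank = K := by
  have hHcol : ∀ i, H i (Sum.inl ()) = 1 := by
    intro i
    rw [hH]
    simp [fromCols]
  exact rank_CSigma_aux p hp hsum H hHcol hHrank Sig1 hSig1 C hC
end

section
/- Let (λ_n) be a sequence of positive reals with λ_n → ∞, and let (t_n) be a sequence of nonnegative reals with (t_n/λ_n − 1) = O(λ_n^{-1/2}). Then the one-dimensional Bregman statistic B(t_n, λ_n) = 2(t_n log(t_n/λ_n) − (t_n − λ_n)) and the one-dimensional Pearson statistic X²(t_n, λ_n) = (t_n − λ_n)²/λ_n satisfy B(t_n, λ_n) − X²(t_n, λ_n) → 0 as n → ∞. -/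
open Filter Asymptotics
open scoped Topology

lemma log_one_add_sub_le {x : ℝ} (hx : |x| ≤ 1/2) :
    |Real.log (1 + x) - x| ≤ 2 * x ^ 2 := by
  have h : |(-x)| < 1 := by rw [abs_neg]; linarith
  have := Real.abs_log_sub_add_sum_range_le h 1
  simp only [Finset.sum_range_one, pow_one, abs_neg] at this
  have h1 : (1 : ℝ) - |x| ≥ 1/2 := by linarith
  have h2 : x ^ 2 / (1 - |x|) ≤ 2 * x ^ 2 := by
    rw [div_le_iff₀ (by linarith)]
    nlinarith [sq_nonneg x, abs_nonneg x]
  rw [show (1 : ℝ) - -x = 1 + x by ring] at this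
  norm_num at this
  rw [show -x + Real.log (1 + x) = Real.log (1 + x) - x by ring] at this
  calc |Real.log (1 + x) - x| ≤ x ^ 2 / (1 - |x|) := this
    _ ≤ 2 * x ^ 2 := h2

lemma key_cubic_bound {x : ℝ} (hx : |x| ≤ 1/2) :
    |2 * ((1 + x) * Real.log (1 + x) - x) - x ^ 2| ≤ 4 * |x| ^ 3 := by
  set g : ℝ → ℝ := fun y => 2 * ((1 + y) * Real.log (1 + y) - y) - y ^ 2 with hg
  set g' : ℝ → ℝ := fun y => 2 * (Real.log (1 + y) - y) with hg'
  have hmem : ∀ y ∈ segment ℝ (0:ℝ) x, |y| ≤ |x| := by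
    intro y hy
    rw [segment_eq_image] at hy
    obtain ⟨a, ha, rfl⟩ := hy
    simp only [smul_eq_mul, mul_zero, zero_add, sub_zero]
    rw [abs_mul, abs_of_nonneg ha.1]
    nlinarith [abs_nonneg x, ha.2]
  have hderiv : ∀ y ∈ segment ℝ (0:ℝ) x, HasDerivWithinAt g (g' y) (segment ℝ 0 x) y := by
    intro y hy
    have hy2 : |y| ≤ 1/2 := (hmem y hy).trans hx
    have hpos : (0:ℝ) < 1 + y := by
      rcases abs_le.1 hy2 with ⟨h1, _⟩; linarith
    have hlog : HasDerivAt (fun y : ℝ => Real.log (1 + y)) ((1 + y)⁻¹) y := by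
      simpa using ((hasDerivAt_id y).const_add 1).log hpos.ne'
    have h1 : HasDerivAt g (2 * ((1 * Real.log (1 + y) + (1 + y) * (1 + y)⁻¹) - 1) - 2 * y) y := by
      apply HasDerivAt.sub _ (by simpa using (hasDerivAt_pow 2 y))
      apply HasDerivAt.const_mul
      exact (((hasDerivAt_id y).const_add 1).mul hlog).sub (hasDerivAt_id y)
    have heq : 2 * ((1 * Real.log (1 + y) + (1 + y) * (1 + y)⁻¹) - 1) - 2 * y = g' y := by
      rw [mul_inv_cancel₀ hpos.ne']
      simp [hg']; ring
    rw [← heq]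
    exact h1.hasDerivWithinAt
  have hbound : ∀ y ∈ segment ℝ (0:ℝ) x, ‖g' y‖ ≤ 4 * x ^ 2 := by
    intro y hy
    have hy2 : |y| ≤ 1/2 := (hmem y hy).trans hx
    have := log_one_add_sub_le hy2
    have hyx : y ^ 2 ≤ x ^ 2 := by
      rw [← sq_abs y, ← sq_abs x]
      exact pow_le_pow_left₀ (abs_nonneg y) (hmem y hy) 2
    simp only [hg', Real.norm_eq_abs, abs_mul, abs_two]
    nlinarith
  have := (convex_segment (0:ℝ) x).norm_image_sub_le_of_norm_hasDerivWithin_le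
    hderiv hbound (left_mem_segment ℝ 0 x) (right_mem_segment ℝ 0 x)
  have hg0 : g 0 = 0 := by simp [hg]
  rw [hg0, sub_zero, sub_zero, Real.norm_eq_abs, Real.norm_eq_abs] at this
  calc |g x| ≤ 4 * x ^ 2 * |x| := this
    _ = 4 * |x| ^ 3 := by rw [← sq_abs x]; ring

/-- If `λ_n → ∞`, `t_n ≥ 0`, and `t_n/λ_n − 1 = O(λ_n^{-1/2})`, then the Bregman statistic
`B(t_n, λ_n) = 2(t_n log(t_n/λ_n) − (t_n − λ_n))` and the Pearson statistic
`X²(t_n, λ_n) = (t_n − λ_n)²/λ_n` satisfy `B − X² → 0`. -/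
theorem bregman_pearson_equiv
    (lam t : ℕ → ℝ) (hlam : ∀ n, 0 < lam n) (ht : ∀ n, 0 ≤ t n)
    (hlim : Tendsto lam atTop atTop)
    (hO : (fun n => t n / lam n - 1) =O[atTop] fun n => (Real.sqrt (lam n))⁻¹) :
    Tendsto (fun n => 2 * (t n * Real.log (t n / lam n) - (t n - lam n)) -
      (t n - lam n) ^ 2 / lam n) atTop (𝓝 0) := by
  obtain ⟨C, hC⟩ := hO.bound
  set D : ℝ := max C 1 with hD
  have hD1 : (1:ℝ) ≤ D := le_max_right _ _
  have hD0 : (0:ℝ) < D := lt_of_lt_of_le one_pos hD1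
  -- bound eventually
  have hev : ∀ᶠ n in atTop, ‖2 * (t n * Real.log (t n / lam n) - (t n - lam n)) -
      (t n - lam n) ^ 2 / lam n‖ ≤ 4 * D ^ 3 * (Real.sqrt (lam n))⁻¹ := by
    filter_upwards [hC, hlim.eventually_ge_atTop ((2*D)^2)] with n hCn hln
    set u : ℝ := t n / lam n - 1 with hu
    have hl := hlam n
    have hs : Real.sqrt (lam n) > 0 := Real.sqrt_pos.2 hl
    have hsD : 2 * D ≤ Real.sqrt (lam n) := by
      have := Real.sqrt_le_sqrt hln
      rwa [Real.sqrt_sq (by positivity)] at this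
    have hinv : (Real.sqrt (lam n))⁻¹ ≤ (2*D)⁻¹ :=
      inv_anti₀ (by positivity) hsD
    have huD : |u| ≤ D * (Real.sqrt (lam n))⁻¹ := by
      have := hCn
      simp only [Real.norm_eq_abs] at this
      calc |u| ≤ C * |(Real.sqrt (lam n))⁻¹| := this
        _ ≤ D * (Real.sqrt (lam n))⁻¹ := by
            rw [abs_of_nonneg (by positivity)]
            exact mul_le_mul_of_nonneg_right (le_max_left _ _) (by positivity)
    have hu2 : |u| ≤ 1/2 := by
      calc |u| ≤ D * (Real.sqrt (lam n))⁻¹ := huD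
        _ ≤ D * (2*D)⁻¹ := mul_le_mul_of_nonneg_left hinv hD0.le
        _ = 1/2 := by field_simp
    have htn : t n = lam n * (1 + u) := by
      rw [hu]; field_simp; ring
    have hexpr : 2 * (t n * Real.log (t n / lam n) - (t n - lam n)) -
        (t n - lam n) ^ 2 / lam n
        = lam n * (2 * ((1 + u) * Real.log (1 + u) - u) - u ^ 2) := by
      have hdiv : t n / lam n = 1 + u := by rw [hu]; ring
      rw [hdiv, htn]
      field_simp
      ring
    rw [hexpr, Real.norm_eq_abs, abs_mul, abs_of_pos hl]
    calc lam n * |2 * ((1 + u) * Real.log (1 + u) - u) - u ^ 2|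
        ≤ lam n * (4 * |u| ^ 3) :=
          mul_le_mul_of_nonneg_left (key_cubic_bound hu2) hl.le
      _ ≤ lam n * (4 * (D * (Real.sqrt (lam n))⁻¹) ^ 3) := by
          apply mul_le_mul_of_nonneg_left _ hl.le
          have : |u| ^ 3 ≤ (D * (Real.sqrt (lam n))⁻¹) ^ 3 :=
            pow_le_pow_left₀ (abs_nonneg u) huD 3
          linarith
      _ = 4 * D ^ 3 * ((Real.sqrt (lam n))⁻¹ ^ 3 * lam n) := by ring
      _ = 4 * D ^ 3 * (Real.sqrt (lam n))⁻¹ := by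
          congr 1
          have h2 := Real.sq_sqrt hl.le
          calc (Real.sqrt (lam n))⁻¹ ^ 3 * lam n
              = (Real.sqrt (lam n))⁻¹ ^ 3 * (Real.sqrt (lam n)) ^ 2 := by rw [h2]
            _ = (Real.sqrt (lam n))⁻¹ := by field_simp
  -- the bound tends to 0
  have hb : Tendsto (fun n => 4 * D ^ 3 * (Real.sqrt (lam n))⁻¹) atTop (𝓝 0) := by
    have hsq : Tendsto (fun n => Real.sqrt (lam n)) atTop atTop := by
      rw [tendsto_atTop_atTop]
      intro b
      obtain ⟨N, hN⟩ := (tendsto_atTop_atTop.1 hlim) (b ^ 2 ⊔ 0)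
      refine ⟨N, fun a ha => ?_⟩
      have h1 : b ^ 2 ≤ lam a := le_trans le_sup_left (hN a ha)
      calc b ≤ |b| := le_abs_self b
        _ = Real.sqrt (b ^ 2) := (Real.sqrt_sq_eq_abs b).symm
        _ ≤ Real.sqrt (lam a) := Real.sqrt_le_sqrt h1
    have := hsq.inv_tendsto_atTop
    simpa using this.const_mul (4 * D ^ 3)
  exact squeeze_zero_norm' hev hb
end

section
/- Let (λ_n) be positive reals with λ_n → ∞, and (t_n), (κ_n) nonnegative and positive sequences respectively with (t_n/λ_n − 1) = O(λ_n^{-1/2}) and (κ_n/λ_n − 1) = O(λ_n^{-1/2}). Then 2(t_n log(t_n/κ_n) − (t_n − κ_n)) − (t_n − κ_n)²/κ_n → 0 as n → ∞. -/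
open Filter Asymptotics
open scoped Topology


lemma sqrt_tendsto_atTop : Filter.Tendsto Real.sqrt Filter.atTop Filter.atTop := by
  refine Filter.tendsto_atTop_atTop.2 fun b => ⟨b^2, fun a ha => ?_⟩
  calc b ≤ |b| := le_abs_self b
  _ = Real.sqrt (b^2) := (Real.sqrt_sq_eq_abs b).symm
  _ ≤ Real.sqrt a := Real.sqrt_le_sqrt ha

lemma key_bound {u : ℝ} (hu : |u| ≤ 1/2) :
    |2 * ((1+u) * Real.log (1+u) - u) - u^2| ≤ 7 * |u|^3 := by
  have h1 : |(-u)| < 1 := by rw [abs_neg]; linarith [hu]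
  have h2 := Real.abs_log_sub_add_sum_range_le h1 2
  simp only [Finset.sum_range_succ, Finset.sum_range_zero] at h2
  have hs : (-u) ^ (0+1) / ((0:ℕ) + 1 : ℝ) = -u := by norm_num
  have hs2 : (-u) ^ (1+1) / ((1:ℕ) + 1 : ℝ) = u^2/2 := by norm_num
  rw [abs_neg] at h2
  have h2' : |(-u + u^2/2) + Real.log (1+u)| ≤ |u|^3 / (1 - |u|) := by
    have : (1 : ℝ) - -u = 1 + u := by ring
    rw [hs, hs2, this] at h2
    simpa using h2
  set r := Real.log (1+u) - u + u^2/2 with hrdef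
  have hr : |r| ≤ 2 * |u|^3 := by
    have h3 : |u|^3 / (1 - |u|) ≤ 2 * |u|^3 := by
      rw [div_le_iff₀ (by linarith [abs_nonneg u] : (0:ℝ) < 1 - |u|)]
      nlinarith [abs_nonneg u, pow_nonneg (abs_nonneg u) 3]
    calc |r| = |(-u + u^2/2) + Real.log (1+u)| := by rw [hrdef]; ring_nf
    _ ≤ |u|^3 / (1 - |u|) := h2'
    _ ≤ 2 * |u|^3 := h3
  have hlog : Real.log (1+u) = u - u^2/2 + r := by rw [hrdef]; ring
  have hexpr : 2 * ((1+u) * Real.log (1+u) - u) - u^2 = -u^3 + 2*(1+u)*r := by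
    rw [hlog]; ring
  rw [hexpr]
  have h1u : |1 + u| ≤ 3/2 := by
    rcases abs_le.1 hu with ⟨hl, hr'⟩
    rw [abs_le]; constructor <;> linarith
  calc |(-u^3) + 2*(1+u)*r| ≤ |(-u^3)| + |2*(1+u)*r| := abs_add_le _ _
  _ = |u|^3 + 2 * |1+u| * |r| := by
      rw [abs_neg, abs_pow, abs_mul, abs_mul]; norm_num
  _ ≤ |u|^3 + 2 * (3/2) * (2*|u|^3) := by
      have := abs_nonneg r
      have := abs_nonneg (1+u)
      nlinarith
  _ = 7 * |u|^3 := by ring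

set_option maxHeartbeats 1000000 in
/-- If `λ_n → ∞`, `t_n ≥ 0`, `κ_n > 0`, `t_n/λ_n − 1 = O(λ_n^{-1/2})`, and
`κ_n/λ_n − 1 = O(λ_n^{-1/2})`, then
`2(t_n log(t_n/κ_n) − (t_n − κ_n)) − (t_n − κ_n)²/κ_n → 0`. -/
theorem bregman_pearson_equiv_two_centers
    (lam t kap : ℕ → ℝ) (hlam : ∀ n, 0 < lam n) (ht : ∀ n, 0 ≤ t n)
    (hkap : ∀ n, 0 < kap n)
    (hlim : Tendsto lam atTop atTop)
    (htO : (fun n => t n / lam n - 1) =O[atTop] fun n => (Real.sqrt (lam n))⁻¹)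
    (hkO : (fun n => kap n / lam n - 1) =O[atTop] fun n => (Real.sqrt (lam n))⁻¹) :
    Tendsto (fun n => 2 * (t n * Real.log (t n / kap n) - (t n - kap n)) -
      (t n - kap n) ^ 2 / kap n) atTop (𝓝 0) := by
  obtain ⟨C₁, hb1⟩ := htO.bound
  obtain ⟨C₂, hb2⟩ := hkO.bound
  set C : ℝ := max (max C₁ C₂) 1 with hCdef
  have hCpos : (0:ℝ) < C := lt_of_lt_of_le one_pos (le_max_right _ _)
  have hC1 : C₁ ≤ C := le_trans (le_max_left _ _) (le_max_left _ _)
  have hC2 : C₂ ≤ C := le_trans (le_max_right _ _) (le_max_left _ _)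
  have hsl : Tendsto (fun n => Real.sqrt (lam n)) atTop atTop :=
    sqrt_tendsto_atTop.comp hlim
  have hev : ∀ᶠ n in atTop, 8 * C ≤ Real.sqrt (lam n) := hsl.eventually_ge_atTop _
  rw [tendsto_zero_iff_abs_tendsto_zero]
  have hlimit : Tendsto (fun n => 896 * C^3 * (Real.sqrt (lam n))⁻¹) atTop (𝓝 0) := by
    have := (tendsto_inv_atTop_zero.comp hsl).const_mul (896 * C^3)
    simpa using this
  refine squeeze_zero' (Eventually.of_forall fun n => abs_nonneg _) ?_ hlimit
  filter_upwards [hb1, hb2, hev] with n hn1 hn2 hn3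
  set s := Real.sqrt (lam n) with hsdef
  have hspos : 0 < s := lt_of_lt_of_le (by positivity) hn3
  have hln := hlam n
  have hkn := hkap n
  have hs2 : s^2 = lam n := Real.sq_sqrt (hln.le)
  simp only [Real.norm_eq_abs, norm_inv] at hn1 hn2
  rw [abs_of_pos hspos] at hn1 hn2
  have ha : |t n / lam n - 1| ≤ C / s := by
    calc |t n / lam n - 1| ≤ C₁ * s⁻¹ := hn1
    _ ≤ C * s⁻¹ := by
        apply mul_le_mul_of_nonneg_right hC1 (by positivity)
    _ = C / s := by rw [div_eq_mul_inv]
  have hb : |kap n / lam n - 1| ≤ C / s := by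
    calc |kap n / lam n - 1| ≤ C₂ * s⁻¹ := hn2
    _ ≤ C * s⁻¹ := mul_le_mul_of_nonneg_right hC2 (by positivity)
    _ = C / s := by rw [div_eq_mul_inv]
  have hCs : C / s ≤ 1/8 := by
    rw [div_le_iff₀ hspos]; linarith
  -- kap bounds
  have hbl := abs_le.1 hb
  have hkl : 7/8 * lam n ≤ kap n := by
    have h1 : (7:ℝ)/8 ≤ kap n / lam n := by linarith [hbl.1, hCs]
    rwa [le_div_iff₀ hln] at h1
  have hku : kap n ≤ 2 * lam n := by
    have h2 : kap n / lam n ≤ 2 := by linarith [hbl.2, hCs]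
    rw [div_le_iff₀ hln] at h2; linarith
  -- bound on t - kap
  have htk : |t n - kap n| ≤ 2 * C / s * lam n := by
    have h : t n - kap n = lam n * ((t n / lam n - 1) - (kap n / lam n - 1)) := by
      field_simp
      ring
    rw [h, abs_mul, abs_of_pos hln]
    have : |(t n / lam n - 1) - (kap n / lam n - 1)| ≤ 2 * C / s := by
      calc |(t n / lam n - 1) - (kap n / lam n - 1)|
          ≤ |t n / lam n - 1| + |kap n / lam n - 1| := abs_sub _ _
      _ ≤ C / s + C / s := add_le_add ha hb
      _ = 2 * C / s := by ring
    nlinarith [abs_nonneg ((t n / lam n - 1) - (kap n / lam n - 1))]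
  set u : ℝ := t n / kap n - 1 with hudef
  have hu : |u| ≤ 4 * C / s := by
    have h : u = (t n - kap n) / kap n := by rw [hudef]; field_simp
    rw [h, abs_div, abs_of_pos hkn]
    rw [div_le_div_iff₀ hkn hspos]
    calc |t n - kap n| * s ≤ (2 * C / s * lam n) * s := by
          nlinarith [abs_nonneg (t n - kap n)]
    _ = 2 * C * lam n := by field_simp
    _ ≤ 4 * C * (7/8 * lam n) := by nlinarith
    _ ≤ 4 * C * kap n := by nlinarith
  have hu2 : |u| ≤ 1/2 := by
    calc |u| ≤ 4 * C / s := hu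
    _ ≤ 1/2 := by rw [div_le_iff₀ hspos]; linarith
  have hkey := key_bound hu2
  have h1u : 1 + u = t n / kap n := by rw [hudef]; ring
  have hexpr : 2 * (t n * Real.log (t n / kap n) - (t n - kap n)) -
      (t n - kap n) ^ 2 / kap n
      = kap n * (2 * ((1+u) * Real.log (1+u) - u) - u^2) := by
    rw [h1u, hudef]
    field_simp
  simp only [Function.comp_apply]
  rw [hexpr, abs_mul, abs_of_pos hkn]
  calc kap n * |2 * ((1+u) * Real.log (1+u) - u) - u^2|
      ≤ kap n * (7 * |u|^3) :=
        mul_le_mul_of_nonneg_left hkey hkn.le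
  _ ≤ (2 * lam n) * (7 * (4*C/s)^3) := by
      have h3 : |u|^3 ≤ (4*C/s)^3 := by
        apply pow_le_pow_left₀ (abs_nonneg u) hu
      nlinarith [abs_nonneg u, pow_nonneg (abs_nonneg u) 3, pow_nonneg (show (0:ℝ) ≤ 4*C/s by positivity) 3]
  _ = 896 * C^3 * (lam n / s^3) := by field_simp; ring
  _ = 896 * C^3 * s⁻¹ := by
      rw [← hs2]; field_simp
end
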